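/- Let Ω be a proper open convex subset of a real normed vector space V. Then the function x ↦ −log(dist(x, V \ Ω)) is convex on Ω. -/

import Mathlib

open Metric Real

private lemma le_infDist_aux {V : Type*} [NormedAddCommGroup V] {s : Set V} {x : V} {r : ℝ}
    (hs : s.Nonempty) (h : ∀ y ∈ s, r ≤ dist x y) : r ≤ Metric.infDist x s := by
  by_contra hlt
  push_neg at hlt
  obtain ⟨y, hy, hd⟩ := (Metric.infDist_lt_iff hs).1 hlt
  exact absurd hd (not_lt.2 (h y hy))

/-- `x ↦ -log (dist (x, V \ Ω))` is convex on a proper open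
convex subset `Ω` of a real normed vector space. -/
theorem convexOn_neg_log_dist_to_compl
    {V : Type*} [NormedAddCommGroup V] [NormedSpace ℝ V]
    (Ω : Set V) (hopen : IsOpen Ω) (hconv : Convex ℝ Ω) (hproper : Ω ≠ Set.univ) :
    ConvexOn ℝ Ω (fun x => -Real.log (Metric.infDist x Ωᶜ)) := by
  have hne : Ωᶜ.Nonempty := by
    rw [Set.nonempty_compl]; exact hproper
  have hpos : ∀ x ∈ Ω, 0 < Metric.infDist x Ωᶜ := fun x hx =>
    (hopen.isClosed_compl.notMem_iff_infDist_pos hne).1 (by simpa using hx)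
  refine ⟨hconv, fun x hx y hy a b ha hb hab => ?_⟩
  set dx := Metric.infDist x Ωᶜ with hdx
  set dy := Metric.infDist y Ωᶜ with hdy
  have hdxp : 0 < dx := hpos x hx
  have hdyp : 0 < dy := hpos y hy
  have hsp : 0 < a * dx + b * dy := by
    rcases eq_or_lt_of_le ha with h | h
    · rw [← h] at hab ⊢; simp at hab; nlinarith
    · nlinarith
  set s := a * dx + b * dy with hs
  -- concavity step: ball of radius s around a•x+b•y is inside Ω
  have hball : Metric.ball (a • x + b • y) s ⊆ Ω := by
    intro w hw
    rw [Metric.mem_ball, dist_eq_norm] at hw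
    set v := w - (a • x + b • y) with hv
    have hvn : ‖v‖ < s := hw
    have hx' : x + (dx / s) • v ∈ Ω := by
      apply Metric.ball_infDist_compl_subset
      rw [Metric.mem_ball, dist_eq_norm]
      have he : x + (dx / s) • v - x = (dx / s) • v := by abel
      rw [he, norm_smul, Real.norm_of_nonneg (le_of_lt (div_pos hdxp hsp))]
      calc dx / s * ‖v‖ < dx / s * s := by
            apply mul_lt_mul_of_pos_left hvn (div_pos hdxp hsp)
        _ = dx := by field_simp
    have hy' : y + (dy / s) • v ∈ Ω := by
      apply Metric.ball_infDist_compl_subset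
      rw [Metric.mem_ball, dist_eq_norm]
      have he : y + (dy / s) • v - y = (dy / s) • v := by abel
      rw [he, norm_smul, Real.norm_of_nonneg (le_of_lt (div_pos hdyp hsp))]
      calc dy / s * ‖v‖ < dy / s * s := by
            apply mul_lt_mul_of_pos_left hvn (div_pos hdyp hsp)
        _ = dy := by field_simp
    have hwe : a • (x + (dx / s) • v) + b • (y + (dy / s) • v) = w := by
      have h1 : (a * (dx / s) + b * (dy / s) : ℝ) = 1 := by field_simp; linarith
      calc a • (x + (dx / s) • v) + b • (y + (dy / s) • v)
          = (a • x + b • y) + (a * (dx / s) + b * (dy / s)) • v := by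
            simp only [smul_add, smul_smul, add_smul]; abel
        _ = (a • x + b • y) + v := by rw [h1, one_smul]
        _ = w := by rw [hv]; abel
    rw [← hwe]
    exact hconv hx' hy' ha hb hab
  have hconc : s ≤ Metric.infDist (a • x + b • y) Ωᶜ := by
    apply le_infDist_aux hne
    intro z hz
    by_contra hlt
    push_neg at hlt
    exact hz (hball (Metric.mem_ball'.2 hlt))
  -- AM-GM step
  have hamgm : dx ^ a * dy ^ b ≤ s :=
    Real.geom_mean_le_arith_mean2_weighted ha hb hdxp.le hdyp.le hab
  have hgm : 0 < dx ^ a * dy ^ b :=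
    mul_pos (Real.rpow_pos_of_pos hdxp a) (Real.rpow_pos_of_pos hdyp b)
  have hlog : a * Real.log dx + b * Real.log dy
      ≤ Real.log (Metric.infDist (a • x + b • y) Ωᶜ) := by
    have := Real.log_le_log hgm (hamgm.trans hconc)
    rwa [Real.log_mul (Real.rpow_pos_of_pos hdxp a).ne' (Real.rpow_pos_of_pos hdyp b).ne',
      Real.log_rpow hdxp, Real.log_rpow hdyp] at this
  simp only [smul_eq_mul]
  linarith [hlog]
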